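/- Let A be a unital C*-algebra, a ∈ A, and p, q projections in A such that a is invertible up to both (p,q) and (p,q'). Then q is Murray–von Neumann equivalent to q', i.e., there exists v ∈ A with vv* = q and v*v = q'. -/

import Mathlib

variable {A : Type*} [NormedRing A] [StarRing A] [CStarRing A] [CompleteSpace A]
  [NormedAlgebra ℂ A] [StarModule ℂ A]

/-- `p` is a projection: self-adjoint idempotent. -/
def IsProjE (p : A) : Prop := p * p = p ∧ star p = p

/-- `a` is invertible up to the pair of projections `(p, q)`. -/
def InvUpTo (a p q : A) : Prop :=
  ∃ b : A, b = (1 - p) * b * (1 - q) ∧ (1 - q) * a * (1 - p) * b = 1 - q ∧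
    b * ((1 - q) * a * (1 - p)) = 1 - p

private lemma one_sub_idem {B : Type*} [Ring B] {x : B} (h : x * x = x) :
    (1 - x) * (1 - x) = 1 - x := by
  rw [mul_sub, mul_one, sub_mul, one_mul, h]; abel

theorem mvnEquiv_of_invUpTo_pair (a p q q' : A) (hp : IsProjE p) (hq : IsProjE q)
    (hq' : IsProjE q') (h1 : InvUpTo a p q) (h2 : InvUpTo a p q') :
    ∃ v : A, v * star v = q ∧ star v * v = q' := by
  obtain ⟨hp2, hps⟩ := hp
  obtain ⟨hq2, hqs⟩ := hq
  obtain ⟨hq'2, hq's⟩ := hq'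
  obtain ⟨b, hb, hab, hba⟩ := h1
  obtain ⟨b', hb', hab', hba'⟩ := h2
  set P : A := 1 - p with hPdef
  set Q : A := 1 - q with hQdef
  set Q' : A := 1 - q' with hQ'def
  have hPP : P * P = P := one_sub_idem hp2
  have hQQ : Q * Q = Q := one_sub_idem hq2
  have hQ'Q' : Q' * Q' = Q' := one_sub_idem hq'2
  -- basic facts about b, b'
  have hbQ : b * Q = b := by
    conv_lhs => rw [hb]
    rw [mul_assoc, hQQ, ← hb]
  have hb'Q : b' * Q' = b' := by
    conv_lhs => rw [hb']
    rw [mul_assoc, hQ'Q', ← hb']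
  have hbq0 : b * q = 0 := by
    have h := hbQ
    rw [hQdef, mul_sub, mul_one] at h
    exact sub_eq_self.mp h
  have hb'q0 : b' * q' = 0 := by
    have h := hb'Q
    rw [hQ'def, mul_sub, mul_one] at h
    exact sub_eq_self.mp h
  have hbaP : b * (a * P) = P := by
    calc b * (a * P) = (b * Q) * (a * P) := by rw [hbQ]
      _ = b * (Q * (a * P)) := by rw [mul_assoc]
      _ = b * (Q * a * P) := by rw [← mul_assoc Q a P]
      _ = P := hba
  have hb'aP : b' * (a * P) = P := by
    calc b' * (a * P) = (b' * Q') * (a * P) := by rw [hb'Q]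
      _ = b' * (Q' * (a * P)) := by rw [mul_assoc]
      _ = b' * (Q' * a * P) := by rw [← mul_assoc Q' a P]
      _ = P := hba'
  -- the idempotents e, e'
  set e : A := a * P * b with hedef
  set e' : A := a * P * b' with he'def
  have hee : e * e = e := by
    calc e * e = ((a * P) * (b * (a * P))) * b := by rw [hedef]; noncomm_ring
      _ = ((a * P) * P) * b := by rw [hbaP]
      _ = (a * (P * P)) * b := by rw [mul_assoc a P P]
      _ = a * P * b := by rw [hPP]
      _ = e := by rw [hedef]
  have hee' : e * e' = e' := by
    calc e * e' = ((a * P) * (b * (a * P))) * b' := by rw [hedef, he'def]; noncomm_ring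
      _ = ((a * P) * P) * b' := by rw [hbaP]
      _ = (a * (P * P)) * b' := by rw [mul_assoc a P P]
      _ = a * P * b' := by rw [hPP]
      _ = e' := by rw [he'def]
  have he'e : e' * e = e := by
    calc e' * e = ((a * P) * (b' * (a * P))) * b := by rw [hedef, he'def]; noncomm_ring
      _ = ((a * P) * P) * b := by rw [hb'aP]
      _ = (a * (P * P)) * b := by rw [mul_assoc a P P]
      _ = a * P * b := by rw [hPP]
      _ = e := by rw [hedef]
  have heq0 : e * q = 0 := by
    rw [hedef, mul_assoc, hbq0, mul_zero]
  have he'q0 : e' * q' = 0 := by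
    rw [he'def, mul_assoc, hb'q0, mul_zero]
  have hQe : Q * e = Q := by
    rw [hedef, ← mul_assoc, ← mul_assoc]; exact hab
  have hQ'e' : Q' * e' = Q' := by
    rw [he'def, ← mul_assoc, ← mul_assoc]; exact hab'
  -- the idempotents f, f' with range projections q, q' and common kernel
  set f : A := 1 - e with hfdef
  set f' : A := 1 - e' with hf'def
  have hqe : q * e = e - Q := by
    have h := hQe
    rw [hQdef, sub_mul, one_mul] at h
    rw [hQdef, ← h]; abel
  have hq'e' : q' * e' = e' - Q' := by
    have h := hQ'e'
    rw [hQ'def, sub_mul, one_mul] at h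
    rw [hQ'def, ← h]; abel
  have hqf : q * f = f := by
    rw [hfdef, mul_sub, mul_one, hqe, hQdef]; abel
  have hq'f' : q' * f' = f' := by
    rw [hf'def, mul_sub, mul_one, hq'e', hQ'def]; abel
  have hfq : f * q = q := by
    rw [hfdef, sub_mul, one_mul, heq0, sub_zero]
  have hf'q' : f' * q' = q' := by
    rw [hf'def, sub_mul, one_mul, he'q0, sub_zero]
  have hff : f * f = f := by
    rw [hfdef, mul_sub, mul_one, sub_mul, one_mul, hee]; abel
  have he'e' : e' * e' = e' := by
    calc e' * e' = ((a * P) * (b' * (a * P))) * b' := by rw [he'def]; noncomm_ring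
      _ = ((a * P) * P) * b' := by rw [hb'aP]
      _ = (a * (P * P)) * b' := by rw [mul_assoc a P P]
      _ = a * P * b' := by rw [hPP]
      _ = e' := by rw [he'def]
  have hf'f' : f' * f' = f' := by
    rw [hf'def, mul_sub, mul_one, sub_mul, one_mul, he'e']; abel
  have hff' : f * f' = f := by
    rw [hfdef, hf'def, mul_sub, mul_one, sub_mul, one_mul, hee']; abel
  have hf'f : f' * f = f' := by
    rw [hfdef, hf'def, mul_sub, mul_one, sub_mul, one_mul, he'e]; abel
  -- the invertible element S with q' * S = S * q
  set Sa : A := 1 + f' - q' with hSadef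
  set Sb : A := 1 + f' - f with hSbdef
  set Sc : A := 1 - f + q with hScdef
  set Sa' : A := 1 - f' + q' with hSa'def
  set Sb' : A := 1 - f' + f with hSb'def
  set Sc' : A := 1 + f - q with hSc'def
  have hSaSa' : Sa * Sa' = 1 := by
    rw [hSadef, hSa'def]
    simp only [mul_add, add_mul, mul_sub, sub_mul, mul_one, one_mul]
    rw [hf'f', hf'q', hq'f', hq'2]; abel
  have hSa'Sa : Sa' * Sa = 1 := by
    rw [hSadef, hSa'def]
    simp only [mul_add, add_mul, mul_sub, sub_mul, mul_one, one_mul]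
    rw [hf'f', hf'q', hq'f', hq'2]; abel
  have hSbSb' : Sb * Sb' = 1 := by
    rw [hSbdef, hSb'def]
    simp only [mul_add, add_mul, mul_sub, sub_mul, mul_one, one_mul]
    rw [hf'f', hff', hf'f, hff]; abel
  have hSb'Sb : Sb' * Sb = 1 := by
    rw [hSbdef, hSb'def]
    simp only [mul_add, add_mul, mul_sub, sub_mul, mul_one, one_mul]
    rw [hf'f', hff', hf'f, hff]; abel
  have hScSc' : Sc * Sc' = 1 := by
    rw [hScdef, hSc'def]
    simp only [mul_add, add_mul, mul_sub, sub_mul, mul_one, one_mul]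
    rw [hff, hfq, hqf, hq2]; abel
  have hSc'Sc : Sc' * Sc = 1 := by
    rw [hScdef, hSc'def]
    simp only [mul_add, add_mul, mul_sub, sub_mul, mul_one, one_mul]
    rw [hff, hfq, hqf, hq2]; abel
  set S : A := Sa * (Sb * Sc) with hSdef
  set S' : A := Sc' * (Sb' * Sa') with hS'def
  clear_value P Q Q' e e' f f' Sa Sb Sc Sa' Sb' Sc' S S'
  have hSS1 : S * S' = 1 := by
    calc S * S' = Sa * (Sb * ((Sc * Sc') * (Sb' * Sa'))) := by rw [hSdef, hS'def]; noncomm_ring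
      _ = Sa * (Sb * (Sb' * Sa')) := by rw [hScSc', one_mul]
      _ = Sa * ((Sb * Sb') * Sa') := by rw [mul_assoc Sb Sb' Sa']
      _ = Sa * Sa' := by rw [hSbSb', one_mul]
      _ = 1 := hSaSa'
  have hSS2 : S' * S = 1 := by
    calc S' * S = Sc' * (Sb' * ((Sa' * Sa) * (Sb * Sc))) := by rw [hSdef, hS'def]; noncomm_ring
      _ = Sc' * (Sb' * (Sb * Sc)) := by rw [hSa'Sa, one_mul]
      _ = Sc' * ((Sb' * Sb) * Sc) := by rw [mul_assoc Sb' Sb Sc]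
      _ = Sc' * Sc := by rw [hSb'Sb, one_mul]
      _ = 1 := hSc'Sc
  have m1 : q' * Sa = f' := by
    rw [hSadef]
    simp only [mul_add, mul_sub, mul_one]
    rw [hq'f', hq'2]; abel
  have m2 : f' * Sb = f' := by
    rw [hSbdef]
    simp only [mul_add, mul_sub, mul_one]
    rw [hf'f', hf'f]; abel
  have m3 : f' * Sc = f' * q := by
    rw [hScdef]
    simp only [mul_add, mul_sub, mul_one]
    rw [hf'f]; abel
  have r1 : Sc * q = q := by
    rw [hScdef]
    simp only [add_mul, sub_mul, one_mul]
    rw [hfq, hq2]; abel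
  have r2 : Sb * q = f' * q := by
    rw [hSbdef]
    simp only [add_mul, sub_mul, one_mul]
    rw [hfq]; abel
  have r3 : Sa * (f' * q) = f' * q := by
    rw [hSadef]
    simp only [add_mul, sub_mul, one_mul]
    rw [← mul_assoc f' f' q, ← mul_assoc q' f' q, hf'f', hq'f']; abel
  have hq'S : q' * S = S * q := by
    have l : q' * S = f' * q := by
      calc q' * S = ((q' * Sa) * Sb) * Sc := by rw [hSdef]; noncomm_ring
        _ = (f' * Sb) * Sc := by rw [m1]
        _ = f' * Sc := by rw [m2]
        _ = f' * q := m3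
    have r : S * q = f' * q := by
      calc S * q = Sa * (Sb * (Sc * q)) := by rw [hSdef]; noncomm_ring
        _ = Sa * (Sb * q) := by rw [r1]
        _ = Sa * (f' * q) := by rw [r2]
        _ = f' * q := r3
    rw [l, r]
  -- analytic part
  letI : CStarAlgebra A := { }
  letI := CStarAlgebra.spectralOrder A
  letI := CStarAlgebra.spectralOrderedRing A
  have hstarSq' : star S * q' = q * star S := by
    have h := congrArg star hq'S
    rw [star_mul, star_mul, hq's, hqs] at h
    exact h
  have hRR : CFC.sqrt (star S * S) * CFC.sqrt (star S * S) = star S * S :=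
    CFC.sqrt_mul_sqrt_self _ (star_mul_self_nonneg S)
  set R : A := CFC.sqrt (star S * S) with hRdef
  clear_value R
  have hR0 : (0 : A) ≤ R := hRdef ▸ CFC.sqrt_nonneg _
  have hRs : star R = R := (IsSelfAdjoint.of_nonneg hR0)
  have hTq : (star S * S) * q = q * (star S * S) := by
    calc (star S * S) * q = star S * (S * q) := by rw [mul_assoc]
      _ = star S * (q' * S) := by rw [hq'S]
      _ = (star S * q') * S := by rw [← mul_assoc]
      _ = (q * star S) * S := by rw [hstarSq']
      _ = q * (star S * S) := by rw [mul_assoc]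
  -- q commutes with R via the symmetry u0 = 1 - q - q
  set u0 : A := 1 - q - q with hu0def
  clear_value u0
  have hu0s : star u0 = u0 := by rw [hu0def]; simp [hqs]
  have hu0u0 : u0 * u0 = 1 := by
    rw [hu0def]
    simp only [mul_sub, sub_mul, mul_one, one_mul]
    rw [hq2]; abel
  have hu0T : u0 * (star S * S) * u0 = star S * S := by
    have e1 : u0 * (star S * S) * u0 =
        star S * S - q * (star S * S) - (star S * S) * q - q * (star S * S)
          - (star S * S) * q + q * ((star S * S) * q) + q * ((star S * S) * q)
          + q * ((star S * S) * q) + q * ((star S * S) * q) := by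
      rw [hu0def]; noncomm_ring
    rw [e1, hTq, ← mul_assoc q q (star S * S), hq2]
    abel
  have hval : u0 * R * u0 = R := by
    have hsq : (u0 * R * u0) * (u0 * R * u0) = star S * S := by
      calc (u0 * R * u0) * (u0 * R * u0) = (u0 * R) * ((u0 * u0) * (R * u0)) := by noncomm_ring
        _ = (u0 * R) * (1 * (R * u0)) := by rw [hu0u0]
        _ = u0 * (R * R) * u0 := by noncomm_ring
        _ = u0 * (star S * S) * u0 := by rw [hRR]
        _ = star S * S := hu0T
    have hpos : (0 : A) ≤ u0 * R * u0 := by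
      have := star_left_conjugate_nonneg hR0 u0
      rwa [hu0s] at this
    have := CFC.sqrt_unique hsq hpos
    rw [← hRdef] at this
    exact this.symm
  have hu0R : u0 * R = R * u0 := by
    have h6 := congrArg (· * u0) hval
    calc u0 * R = u0 * R * (u0 * u0) := by rw [hu0u0, mul_one]
      _ = (u0 * R * u0) * u0 := by rw [← mul_assoc]
      _ = R * u0 := h6
  have hqR : q * R = R * q := by
    have h8 : R - q * R - q * R = R - R * q - R * q := by
      calc R - q * R - q * R = u0 * R := by rw [hu0def]; noncomm_ring
        _ = R * u0 := hu0R
        _ = R - R * q - R * q := by rw [hu0def]; noncomm_ring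
    have h7 : q * R + q * R = R * q + R * q := by
      calc q * R + q * R = R - (R - q * R - q * R) := by abel
        _ = R - (R - R * q - R * q) := by rw [h8]
        _ = R * q + R * q := by abel
    have h10 : (2 : ℂ) • (q * R) = (2 : ℂ) • (R * q) := by
      rw [two_smul, two_smul]; exact h7
    calc q * R = (2 : ℂ)⁻¹ • ((2 : ℂ) • (q * R)) := by rw [smul_smul]; norm_num
      _ = (2 : ℂ)⁻¹ • ((2 : ℂ) • (R * q)) := by rw [h10]
      _ = R * q := by rw [smul_smul]; norm_num
  -- inverse of R
  set Ti : A := S' * star S' with hTidef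
  clear_value Ti
  have hTTi : (star S * S) * Ti = 1 := by
    calc (star S * S) * Ti = star S * ((S * S') * star S') := by rw [hTidef]; noncomm_ring
      _ = star S * star S' := by rw [hSS1, one_mul]
      _ = star (S' * S) := by rw [star_mul]
      _ = 1 := by rw [hSS2, star_one]
  have hTiT : Ti * (star S * S) = 1 := by
    calc Ti * (star S * S) = S' * ((star S' * star S) * S) := by rw [hTidef]; noncomm_ring
      _ = S' * (star (S * S') * S) := by rw [star_mul]
      _ = S' * S := by rw [hSS1, star_one, one_mul]
      _ = 1 := hSS2
  have hRT : R * (star S * S) = (star S * S) * R := by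
    rw [← hRR]; noncomm_ring
  have hRTi : R * Ti = Ti * R := by
    calc R * Ti = (Ti * (star S * S)) * (R * Ti) := by rw [hTiT, one_mul]
      _ = Ti * (((star S * S) * R) * Ti) := by noncomm_ring
      _ = Ti * ((R * (star S * S)) * Ti) := by rw [hRT]
      _ = (Ti * R) * ((star S * S) * Ti) := by noncomm_ring
      _ = Ti * R := by rw [hTTi, mul_one]
  obtain ⟨Ri, hRidef⟩ : ∃ x : A, x = Ti * R := ⟨_, rfl⟩
  have hRiR : Ri * R = 1 := by
    rw [hRidef, mul_assoc, hRR, hTiT]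
  have hRRi : R * Ri = 1 := by
    calc R * Ri = (R * Ti) * R := by rw [hRidef, mul_assoc]
      _ = (Ti * R) * R := by rw [hRTi]
      _ = Ti * (R * R) := by rw [mul_assoc]
      _ = Ti * (star S * S) := by rw [hRR]
      _ = 1 := hTiT
  have hRiRi : Ri * Ri = S' * star S' := by
    calc Ri * Ri = (Ri * Ri) * ((star S * S) * Ti) := by rw [hTTi, mul_one]
      _ = (Ri * Ri) * ((R * R) * Ti) := by rw [hRR]
      _ = Ri * ((Ri * R) * (R * Ti)) := by noncomm_ring
      _ = Ri * (1 * (R * Ti)) := by rw [hRiR]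
      _ = (Ri * R) * Ti := by noncomm_ring
      _ = 1 * Ti := by rw [hRiR]
      _ = S' * star S' := by rw [one_mul]; exact hTidef
  have hRis : star Ri = Ri := by
    have hx : star Ri * R = 1 := by
      rw [← hRs, ← star_mul, hRRi, star_one]
    calc star Ri = star Ri * (R * Ri) := by rw [hRRi, mul_one]
      _ = (star Ri * R) * Ri := by rw [mul_assoc]
      _ = Ri := by rw [hx, one_mul]
  have hqRi : q * Ri = Ri * q := by
    calc q * Ri = (Ri * R) * (q * Ri) := by rw [hRiR, one_mul]
      _ = Ri * ((R * q) * Ri) := by noncomm_ring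
      _ = Ri * ((q * R) * Ri) := by rw [hqR]
      _ = (Ri * q) * (R * Ri) := by noncomm_ring
      _ = Ri * q := by rw [hRRi, mul_one]
  -- the partial isometry
  refine ⟨q * (Ri * star S), ?_, ?_⟩
  · have hsv : star (q * (Ri * star S)) = (S * Ri) * q := by
      rw [star_mul, star_mul, star_star, hRis, hqs]
    rw [hsv]
    calc (q * (Ri * star S)) * ((S * Ri) * q)
        = q * (Ri * ((star S * S) * (Ri * q))) := by noncomm_ring
      _ = q * (Ri * ((R * R) * (Ri * q))) := by rw [hRR]
      _ = q * ((Ri * R) * ((R * Ri) * q)) := by noncomm_ring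
      _ = q * (1 * (1 * q)) := by rw [hRiR, hRRi]
      _ = q * q := by rw [one_mul, one_mul]
      _ = q := hq2
  · have hsv : star (q * (Ri * star S)) = (S * Ri) * q := by
      rw [star_mul, star_mul, star_star, hRis, hqs]
    rw [hsv]
    calc ((S * Ri) * q) * (q * (Ri * star S))
        = S * (Ri * ((q * q) * (Ri * star S))) := by noncomm_ring
      _ = S * (Ri * (q * (Ri * star S))) := by rw [hq2]
      _ = S * ((Ri * q) * (Ri * star S)) := by noncomm_ring
      _ = S * ((q * Ri) * (Ri * star S)) := by rw [← hqRi]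
      _ = (S * q) * ((Ri * Ri) * star S) := by noncomm_ring
      _ = (S * q) * ((S' * star S') * star S) := by rw [hRiRi]
      _ = (q' * S) * ((S' * star S') * star S) := by rw [← hq'S]
      _ = q' * ((S * S') * (star S' * star S)) := by noncomm_ring
      _ = q' * ((S * S') * star (S * S')) := by rw [← star_mul]
      _ = q' := by rw [hSS1, star_one, one_mul, mul_one]
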